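/- Let δ := ω·(α - σ(α)), t := ε(1), and suppose s₀ ∈ K satisfies algebraMap K R (s₀) = δ·σ(δ). Then the following identity holds in the formal power series ring K[[x]]: (Σ_{p≥0} ε(δ^p)·x^p) · (1 - t·s₀·x + s₀·x²) = t + (2 - t²·s₀)·x. -/

import Mathlib

open Polynomial TensorProduct

noncomputable section

variable {K : Type*} [CommRing K]

/-- The quadratic `K`-algebra `K[X]/(X² - s·X + p)`. -/
abbrev Quad (s p : K) : Type _ := AdjoinRoot (X ^ 2 - C s * X + C p)

/-- The image of `X`, i.e. the generator `α`. -/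
def qα (s p : K) : Quad s p := AdjoinRoot.root _

lemma quad_aeval_root (s p : K) :
    (aeval (qα s p)) (X ^ 2 - C s * X + C p) = 0 := by
  simp [qα, AdjoinRoot.aeval_eq, AdjoinRoot.mk_self]

/-- The involution `σ` of the quadratic algebra, with `σ α = s - α`. -/
def qσ (s p : K) : Quad s p →ₐ[K] Quad s p :=
  AdjoinRoot.liftAlgHom _ (Algebra.ofId K (Quad s p)) (algebraMap K (Quad s p) s - qα s p) (by
    change aeval (algebraMap K (Quad s p) s - qα s p) (X ^ 2 - C s * X + C p) = 0
    have h := quad_aeval_root s p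
    simp only [map_add, map_sub, map_mul, map_pow, aeval_X, aeval_C] at h ⊢
    linear_combination h)
/- ---------- auxiliary lemmas ---------- -/

lemma quad_monic (s p : K) : (X ^ 2 - C s * X + C p).Monic := by monicity!

lemma quad_sq (s p : K) :
    qα s p * qα s p
      = algebraMap K (Quad s p) s * qα s p - algebraMap K (Quad s p) p := by
  have h := quad_aeval_root s p
  simp only [map_add, map_sub, map_mul, map_pow, aeval_X, aeval_C] at h
  linear_combination h

lemma qσ_root (s p : K) :
    qσ s p (qα s p) = algebraMap K (Quad s p) s - qα s p := by
  show (AdjoinRoot.liftAlgHom (X ^ 2 - C s * X + C p) (Algebra.ofId K (Quad s p))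
      (algebraMap K (Quad s p) s - qα s p) _) (AdjoinRoot.root _) = _
  rw [AdjoinRoot.liftAlgHom_root]

lemma quad_exists_coords (s p : K) (r : Quad s p) :
    ∃ u v : K,
      r = algebraMap K (Quad s p) u + algebraMap K (Quad s p) v * qα s p := by
  rcases subsingleton_or_nontrivial K with hK | hK
  · haveI : Subsingleton (Quad s p) := AdjoinRoot.mk_surjective.subsingleton
    exact ⟨0, 0, Subsingleton.elim _ _⟩
  · obtain ⟨q, rfl⟩ := AdjoinRoot.mk_surjective r
    have hm := quad_monic s p
    have hdeg : (X ^ 2 - C s * X + C p).natDegree = 2 := by compute_degree!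
    have hne : (X ^ 2 - (C s) * X + C p) ≠ 1 := by
      intro h
      rw [h] at hdeg
      simp at hdeg
    have hlt := Polynomial.natDegree_modByMonic_lt q hm hne
    rw [hdeg] at hlt
    refine ⟨(q %ₘ (X ^ 2 - C s * X + C p)).coeff 0,
            (q %ₘ (X ^ 2 - C s * X + C p)).coeff 1, ?_⟩
    conv_lhs => rw [← Polynomial.modByMonic_add_div q (X ^ 2 - C s * X + C p)]
    rw [map_add, map_mul, AdjoinRoot.mk_self, zero_mul, add_zero]
    conv_lhs => rw [Polynomial.eq_X_add_C_of_natDegree_le_one (Nat.lt_succ_iff.mp hlt)]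
    rw [map_add, map_mul, AdjoinRoot.mk_C, AdjoinRoot.mk_C, AdjoinRoot.mk_X]
    rw [← AdjoinRoot.algebraMap_eq, qα]
    ring

lemma quad_mul (s p u v u' v' : K) :
    (algebraMap K (Quad s p) u + algebraMap K (Quad s p) v * qα s p) *
        (algebraMap K (Quad s p) u' + algebraMap K (Quad s p) v' * qα s p)
      = algebraMap K (Quad s p) (u * u' - p * (v * v'))
          + algebraMap K (Quad s p) (u * v' + v * u' + s * (v * v')) * qα s p := by
  simp only [map_add, map_sub, map_mul]
  linear_combination (algebraMap K (Quad s p) v * algebraMap K (Quad s p) v') *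
    quad_sq s p

/-- With `δ = ω·(α - σ α)`, `t = ε 1`, and `s₀ ∈ K` such that `s₀·1 = δ·σ(δ)`,
the power series identity
`(Σ_p ε(δ^p) x^p)·(1 - t·s₀·x + s₀·x²) = t + (2 - t²·s₀)·x` holds in `K[[x]]`. -/
theorem stmt8 (s p : K) (ω : (Quad s p)ˣ) (ε : Quad s p →ₗ[K] K)
    (hω : ε (ω : Quad s p) = 0) (hωα : ε ((ω : Quad s p) * qα s p) = 1)
    (s₀ : K)
    (hs₀ : algebraMap K (Quad s p) s₀
      = (ω : Quad s p) * (qα s p - qσ s p (qα s p)) *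
          qσ s p ((ω : Quad s p) * (qα s p - qσ s p (qα s p)))) :
    (PowerSeries.mk fun n : ℕ =>
        ε (((ω : Quad s p) * (qα s p - qσ s p (qα s p))) ^ n)) *
      (1 - PowerSeries.C (ε 1 * s₀) * PowerSeries.X
         + PowerSeries.C s₀ * PowerSeries.X ^ 2)
    = PowerSeries.C (ε 1)
        + PowerSeries.C (2 - (ε 1) ^ 2 * s₀) * PowerSeries.X := by
  have hεA : ∀ (c : K) (m : Quad s p),
      ε (algebraMap K (Quad s p) c * m) = c * ε m := by
    intro c m
    rw [← Algebra.smul_def, map_smul, smul_eq_mul]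
  have hεlin : ∀ u v : K,
      ε (algebraMap K (Quad s p) u + algebraMap K (Quad s p) v * qα s p)
        = u * ε 1 + v * ε (qα s p) := by
    intro u v
    calc ε (algebraMap K (Quad s p) u + algebraMap K (Quad s p) v * qα s p)
        = ε (algebraMap K (Quad s p) u * 1 + algebraMap K (Quad s p) v * qα s p) := by
          rw [mul_one]
      _ = u * ε 1 + v * ε (qα s p) := by rw [map_add, hεA, hεA]
  obtain ⟨x, y, hxy⟩ := quad_exists_coords s p (ω : Quad s p)
  set t := ε 1 with ht
  set e := ε (qα s p) with he
  set δ := (ω : Quad s p) * (qα s p - qσ s p (qα s p)) with hδdef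
  -- basic relations in K
  have h1 : x * t + y * e = 0 := by rw [← hεlin, ← hxy, hω]
  have h2 : (x * 1 + y * 0 + s * (y * 1)) * e + (x * 0 - p * (y * 1)) * t = 1 := by
    have hq := quad_mul s p x y 0 1
    rw [map_zero, map_one, zero_add, one_mul] at hq
    rw [hxy, hq, hεlin] at hωα
    linear_combination hωα
  have h2' : -(p * y) * t + (x + s * y) * e = 1 := by linear_combination h2
  -- coordinates of δ
  have hδc : δ = algebraMap K (Quad s p) (-(s * x) - p * (2 * y))
      + algebraMap K (Quad s p) (2 * x + s * y) * qα s p := by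
    rw [hδdef, qσ_root, hxy]
    simp only [map_add, map_sub, map_neg, map_mul, map_ofNat]
    linear_combination (2 * algebraMap K (Quad s p) y) * quad_sq s p
  -- σ δ and δ * σ δ
  have hσδ : qσ s p δ
      = algebraMap K (Quad s p) (-(s * x) - p * (2 * y))
        + algebraMap K (Quad s p) (2 * x + s * y)
            * (algebraMap K (Quad s p) s - qα s p) := by
    rw [hδc]
    simp only [map_add, map_mul, AlgHom.commutes, qσ_root]
  have hds : δ * qσ s p δ
      = algebraMap K (Quad s p)
          (-((s ^ 2 - 4 * p) * (x ^ 2 + s * (x * y) + p * y ^ 2))) := by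
    rw [hσδ, hδc]
    simp only [map_add, map_sub, map_neg, map_mul, map_pow, map_ofNat]
    linear_combination (-((2 * algebraMap K (Quad s p) x
        + algebraMap K (Quad s p) s * algebraMap K (Quad s p) y)
      * (2 * algebraMap K (Quad s p) x
        + algebraMap K (Quad s p) s * algebraMap K (Quad s p) y))) * quad_sq s p
  -- extract the scalar relation for s₀
  have hs₀K : s₀ = -((s ^ 2 - 4 * p) * (x ^ 2 + s * (x * y) + p * y ^ 2)) := by
    have h := hs₀
    rw [hds] at h
    have h3 : ε (algebraMap K (Quad s p) s₀ * ((ω : Quad s p) * qα s p))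
        = ε (algebraMap K (Quad s p)
            (-((s ^ 2 - 4 * p) * (x ^ 2 + s * (x * y) + p * y ^ 2)))
          * ((ω : Quad s p) * qα s p)) := by rw [h]
    rw [hεA, hεA, hωα, mul_one, mul_one] at h3
    exact h3
  have hF1 : (x ^ 2 + s * (x * y) + p * y ^ 2) * t = -y := by
    linear_combination (x + s * y) * h1 - y * h2'
  have hεδ : ε δ = 2 := by
    rw [hδc, hεlin]
    linear_combination (-s) * h1 + 2 * h2'
  -- now the power series identity, coefficient by coefficient
  ext n
  have hre : (PowerSeries.mk fun n : ℕ => ε (δ ^ n)) *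
      (1 - PowerSeries.C (t * s₀) * PowerSeries.X
         + PowerSeries.C s₀ * PowerSeries.X ^ 2)
      = PowerSeries.mk (fun n : ℕ => ε (δ ^ n))
        - ((PowerSeries.mk fun n : ℕ => ε (δ ^ n)) * PowerSeries.X ^ 1)
            * PowerSeries.C (t * s₀)
        + ((PowerSeries.mk fun n : ℕ => ε (δ ^ n)) * PowerSeries.X ^ 2)
            * PowerSeries.C s₀ := by ring
  rw [hre, map_add, map_sub, PowerSeries.coeff_mul_C, PowerSeries.coeff_mul_C,
    PowerSeries.coeff_mul_X_pow', PowerSeries.coeff_mul_X_pow',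
    PowerSeries.coeff_mk, map_add, PowerSeries.coeff_C,
    show (PowerSeries.C (2 - t ^ 2 * s₀) * PowerSeries.X : PowerSeries K)
      = PowerSeries.X * PowerSeries.C (2 - t ^ 2 * s₀) by ring,
    PowerSeries.coeff_mul_C, PowerSeries.coeff_X]
  match n with
  | 0 =>
    simp [pow_zero]
    exact ht.symm
  | 1 =>
    norm_num
    linear_combination hεδ + (t * s₀) * ht
  | (m + 2) =>
    have h2le : 2 ≤ m + 2 := by omega
    have h1le : 1 ≤ m + 2 := by omega
    rw [if_pos h2le, if_pos h1le, if_neg (by omega : ¬ m + 2 = 0),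
      if_neg (by omega : ¬ m + 2 = 1)]
    simp only [Nat.add_sub_cancel, show m + 2 - 1 = m + 1 by omega]
    -- the recurrence
    obtain ⟨u, v, hr⟩ := quad_exists_coords s p (δ ^ m)
    have hm1 : δ ^ (m + 1)
        = algebraMap K (Quad s p) (u * (-(s * x) - p * (2 * y))
              - p * (v * (2 * x + s * y)))
          + algebraMap K (Quad s p) (u * (2 * x + s * y)
              + v * (-(s * x) - p * (2 * y)) + s * (v * (2 * x + s * y))) * qα s p := by
      rw [pow_succ, hr, hδc]
      exact quad_mul s p u v _ _
    have hm2 : δ ^ (m + 2)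
        = algebraMap K (Quad s p)
            ((u * (-(s * x) - p * (2 * y)) - p * (v * (2 * x + s * y)))
                * (-(s * x) - p * (2 * y))
              - p * ((u * (2 * x + s * y) + v * (-(s * x) - p * (2 * y))
                  + s * (v * (2 * x + s * y))) * (2 * x + s * y)))
          + algebraMap K (Quad s p)
            ((u * (-(s * x) - p * (2 * y)) - p * (v * (2 * x + s * y)))
                * (2 * x + s * y)
              + (u * (2 * x + s * y) + v * (-(s * x) - p * (2 * y))
                  + s * (v * (2 * x + s * y))) * (-(s * x) - p * (2 * y))
              + s * ((u * (2 * x + s * y) + v * (-(s * x) - p * (2 * y))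
                  + s * (v * (2 * x + s * y))) * (2 * x + s * y))) * qα s p := by
      rw [show m + 2 = (m + 1) + 1 by omega, pow_succ, hm1, hδc]
      exact quad_mul s p _ _ _ _
    simp only [PowerSeries.coeff_mk]
    rw [hm1, hm2, hr, hεlin, hεlin, hεlin]
    linear_combination
      ((u * t + v * e)
        - t * ((u * (-(s * x) - p * (2 * y)) - p * (v * (2 * x + s * y))) * t
            + (u * (2 * x + s * y) + v * (-(s * x) - p * (2 * y))
                + s * (v * (2 * x + s * y))) * e)) * hs₀K
      + (s ^ 2 - 4 * p)
          * ((u * (-(s * x) - p * (2 * y)) - p * (v * (2 * x + s * y))) * t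
            + (u * (2 * x + s * y) + v * (-(s * x) - p * (2 * y))
                + s * (v * (2 * x + s * y))) * e) * hF1

end
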